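/- The double topologist's sine curve X = ({0} × [−1,1]) ∪ {(t, sin(1/t)) : t ∈ [−1,1], t ≠ 0} ⊆ ℝ², obtained by attaching two copies of the topologist's sine curve along the limit segment, is not an AANR. -/

import Mathlib

open Topology

universe u v

/-- A compactum `X` is an *approximative absolute neighborhood retract* (AANR). -/
def IsAANR (X : Type u) [TopologicalSpace X] : Prop :=
  ∀ (Y : Type v) [MetricSpace Y] [CompactSpace Y] (θ : X → Y),
    IsEmbedding θ →
    ∀ ε > (0 : ℝ), ∃ δ > (0 : ℝ), ∃ r : Y → X,
      ContinuousOn r {y | Metric.infDist y (Set.range θ) ≤ δ} ∧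
      ∀ x : X, dist (θ (r (θ x))) (θ x) ≤ ε

/-- The double topologist's sine curve
`({0} × [−1,1]) ∪ {(t, sin(1/t)) : t ∈ [−1,1], t ≠ 0} ⊆ ℝ²`, i.e. two copies of the
topologist's sine curve attached along the limit segment. -/
noncomputable def doubleSineCurve : Set (ℝ × ℝ) :=
  {p : ℝ × ℝ | p.1 = 0 ∧ p.2 ∈ Set.Icc (-1 : ℝ) 1} ∪
    {p : ℝ × ℝ | ∃ t : ℝ, t ∈ Set.Icc (-1 : ℝ) 1 ∧ t ≠ 0 ∧ p = (t, Real.sin (1 / t))}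


lemma dsc_mem_vert {y : ℝ} (hy : |y| ≤ 1) : ((0:ℝ), y) ∈ doubleSineCurve :=
  Or.inl ⟨rfl, Set.mem_Icc.mpr (abs_le.mp hy)⟩

lemma dsc_mem_curve {t : ℝ} (h1 : |t| ≤ 1) (h0 : t ≠ 0) :
    (t, Real.sin (1/t)) ∈ doubleSineCurve :=
  Or.inr ⟨t, Set.mem_Icc.mpr (abs_le.mp h1), h0, rfl⟩

lemma dsc_snd_eq {p : ℝ × ℝ} (hp : p ∈ doubleSineCurve) (h : p.1 ≠ 0) :
    p.2 = Real.sin (1 / p.1) := by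
  rcases hp with ⟨h0, _⟩ | ⟨t, _, ht0, rfl⟩
  · exact absurd h0 h
  · rfl

lemma dsc_bounds {p : ℝ × ℝ} (hp : p ∈ doubleSineCurve) : |p.1| ≤ 1 ∧ |p.2| ≤ 1 := by
  rcases hp with ⟨h0, h1⟩ | ⟨t, ht, ht0, rfl⟩
  · rw [h0]; simpa using abs_le.mpr (Set.mem_Icc.mp h1)
  · exact ⟨abs_le.mpr (Set.mem_Icc.mp ht), abs_le.mpr ⟨Real.neg_one_le_sin _, Real.sin_le_one _⟩⟩

lemma no_path_in_dsc (ρ : ℝ → ℝ × ℝ) (hρ : Continuous ρ)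
    (hmem : ∀ s, ρ s ∈ doubleSineCurve)
    (h0 : 0 < (ρ 0).1) (h1 : (ρ 1).1 < 0) : False := by
  set S : Set ℝ := Set.Icc 0 1 ∩ (fun s => (ρ s).1) ⁻¹' Set.Iic 0 with hS
  have hf : Continuous fun s => (ρ s).1 := continuous_fst.comp hρ
  have hScl : IsClosed S := isClosed_Icc.inter (isClosed_Iic.preimage hf)
  have hSne : S.Nonempty := ⟨1, Set.mem_Icc.mpr ⟨zero_le_one, le_refl 1⟩, le_of_lt h1⟩
  have hSbd : BddBelow S := ⟨0, fun s hs => hs.1.1⟩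
  set s₀ := sInf S with hs₀def
  have hs₀ : s₀ ∈ S := hScl.csInf_mem hSne hSbd
  have hs₀pos : 0 < s₀ := by
    rcases lt_or_eq_of_le hs₀.1.1 with h | h
    · exact h
    · exact absurd (h ▸ hs₀.2 : (ρ 0).1 ≤ 0) (not_le.mpr h0)
  have hpre : ∀ s, 0 ≤ s → s < s₀ → 0 < (ρ s).1 := by
    intro s hs hss
    by_contra hc
    exact absurd (csInf_le hSbd ⟨Set.mem_Icc.mpr ⟨hs, le_trans hss.le hs₀.1.2⟩, not_lt.mp hc⟩)
      (not_le.mpr hss)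
  -- first coordinate at s₀ is 0
  have hfst0 : (ρ s₀).1 = 0 := by
    refine le_antisymm hs₀.2 ?_
    have htend : Filter.Tendsto (fun s => (ρ s).1) (𝓝[<] s₀) (𝓝 (ρ s₀).1) :=
      (hf.tendsto s₀).mono_left nhdsWithin_le_nhds
    refine ge_of_tendsto htend ?_
    filter_upwards [Ioo_mem_nhdsLT_of_mem ⟨hs₀pos, le_refl s₀⟩] with s hs
    exact (hpre s hs.1.le hs.2).le
  set y₀ := (ρ s₀).2 with hy₀def
  have hρs₀ : ρ s₀ = (0, y₀) := Prod.ext hfst0 rfl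
  -- continuity at s₀
  obtain ⟨η, hη, hcont⟩ := Metric.continuousAt_iff.mp hρ.continuousAt (1/2) (by norm_num)
  set s₁ := max 0 (s₀ - η/2) with hs₁def
  have hs₁lt : s₁ < s₀ := max_lt hs₀pos (by linarith)
  have hs₁0 : 0 ≤ s₁ := le_max_left _ _
  have hclose : ∀ s ∈ Set.Icc s₁ s₀, |(ρ s).2 - y₀| < 1/2 := by
    intro s hs
    have hd : dist s s₀ < η := by
      rw [Real.dist_eq, abs_sub_lt_iff]
      constructor
      · linarith [hs.2]
      · have := le_max_right 0 (s₀ - η/2)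
        have := hs.1
        linarith
    have := hcont hd
    calc |(ρ s).2 - y₀| = dist (ρ s).2 (ρ s₀).2 := by rw [Real.dist_eq, hy₀def]
      _ ≤ dist (ρ s) (ρ s₀) := by rw [Prod.dist_eq]; exact le_max_right _ _
      _ < 1/2 := this
  set τ := (ρ s₁).1 with hτdef
  have hτ : 0 < τ := hpre s₁ hs₁0 hs₁lt
  -- choose a point where sin (1/t) = ±1 with 0 < t ≤ τ
  set k : ℕ := ⌈1/τ⌉₊ with hk
  have hkτ : 1/τ ≤ (k:ℝ) := Nat.le_ceil _
  have hpi := Real.pi_gt_three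
  set w : ℝ := (if y₀ ≤ 0 then Real.pi/2 else -(Real.pi/2)) + (k+1) * (2*Real.pi) with hw
  have hwge : 1/τ ≤ w := by
    have h1 : -(Real.pi/2) + (k+1) * (2*Real.pi) ≤ w := by
      rw [hw]; split_ifs <;> nlinarith
    have : (k:ℝ) ≤ -(Real.pi/2) + (k+1) * (2*Real.pi) := by nlinarith
    linarith
  have hwpos : 0 < w := lt_of_lt_of_le (by positivity) hwge
  have hsinw : Real.sin w = if y₀ ≤ 0 then 1 else -1 := by
    rw [hw]
    have : ((k:ℝ)+1) * (2*Real.pi) = ((k+1 : ℕ) : ℝ) * (2*Real.pi) := by push_cast; ring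
    rw [this, Real.sin_add_nat_mul_two_pi]
    split_ifs
    · exact Real.sin_pi_div_two
    · rw [Real.sin_neg, Real.sin_pi_div_two]
  set t := 1/w with ht
  have htpos : 0 < t := by positivity
  have htτ : t ≤ τ := by
    rw [ht, div_le_iff₀ hwpos]
    rw [div_le_iff₀ hτ] at hwge
    linarith
  have hone : 1/t = w := by rw [ht, one_div_one_div]
  -- IVT on [s₁, s₀]
  have hiv := intermediate_value_Icc' hs₁lt.le (hf.continuousOn (s := Set.Icc s₁ s₀))
  have htm : t ∈ Set.Icc ((ρ s₀).1) ((ρ s₁).1) := Set.mem_Icc.mpr ⟨hfst0 ▸ htpos.le, htτ⟩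
  obtain ⟨s, hsI, hst'⟩ := hiv htm
  have hst : (ρ s).1 = t := hst'
  have hsnd : (ρ s).2 = Real.sin (1/t) := by
    rw [← hst]
    exact dsc_snd_eq (hmem s) (by rw [hst]; exact htpos.ne')
  have hsy : |(ρ s).2 - y₀| < 1/2 := hclose s hsI
  rw [hsnd, hone, hsinw] at hsy
  -- y₀ ∈ [-1,1]
  have hy₀b : |y₀| ≤ 1 := (dsc_bounds (hmem s₀)).2
  rw [abs_le] at hy₀b
  split_ifs at hsy with hy
  · rw [abs_lt] at hsy; linarith [hsy.1]
  · rw [abs_lt] at hsy; push_neg at hy; linarith [hsy.2]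


noncomputable def dsg (t₀ t : ℝ) : ℝ :=
  if t₀ ≤ |t| then Real.sin (1/t) else (t/t₀) * Real.sin (1/t₀)

lemma dsg_eq_sin {t₀ t : ℝ} (h : t₀ ≤ |t|) : dsg t₀ t = Real.sin (1/t) := if_pos h

lemma dsg_cont {t₀ : ℝ} (h : 0 < t₀) : Continuous (dsg t₀) := by
  unfold dsg
  apply continuous_if
  · intro a ha
    rw [frontier_eq_closure_inter_closure] at ha
    have hcl : IsClosed {t : ℝ | t₀ ≤ |t|} := isClosed_Ici.preimage continuous_abs
    have h1 : t₀ ≤ |a| := by have := ha.1; rwa [hcl.closure_eq] at this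
    have h2 : |a| ≤ t₀ := by
      have hsub : {t : ℝ | t₀ ≤ |t|}ᶜ ⊆ {t : ℝ | |t| ≤ t₀} := fun t ht => (not_le.mp (by simpa using ht)).le
      exact closure_minimal hsub (isClosed_Iic.preimage continuous_abs) ha.2
    have habs : |a| = t₀ := le_antisymm h2 h1
    rcases (abs_eq h.le).mp habs with rfl | rfl
    · rw [div_self h.ne', one_mul]
    · rw [one_div, one_div, inv_neg, Real.sin_neg, neg_div, div_self h.ne', ← one_div]
      ring
  · have hcl : IsClosed {t : ℝ | t₀ ≤ |t|} := isClosed_Ici.preimage continuous_abs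
    rw [hcl.closure_eq]
    refine Real.continuous_sin.comp_continuousOn (continuousOn_const.div continuousOn_id ?_)
    exact fun t ht => abs_pos.mp (lt_of_lt_of_le h ht)
  · exact (((continuous_id.div_const t₀).mul continuous_const)).continuousOn

lemma dsg_abs_le {t₀ : ℝ} (h : 0 < t₀) (t : ℝ) : |dsg t₀ t| ≤ 1 := by
  unfold dsg
  split_ifs with h'
  · exact abs_le.mpr ⟨Real.neg_one_le_sin _, Real.sin_le_one _⟩
  · rw [abs_mul]
    have h1 : |t / t₀| ≤ 1 := by
      rw [abs_div, abs_of_pos h, div_le_one h]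
      exact (not_le.mp h').le
    have h2 : |Real.sin (1/t₀)| ≤ 1 := abs_le.mpr ⟨Real.neg_one_le_sin _, Real.sin_le_one _⟩
    nlinarith [abs_nonneg (t/t₀), abs_nonneg (Real.sin (1/t₀))]

/-- The double topologist's sine curve is not an AANR. -/
theorem doubleSineCurve_not_isAANR : ¬ IsAANR ↥doubleSineCurve := by
  intro h
  haveI : CompactSpace ↥(Metric.closedBall (0:ℝ×ℝ) 2) :=
    isCompact_iff_compactSpace.mp (isCompact_closedBall _ _)
  have hballmem : ∀ p : ℝ × ℝ, p ∈ doubleSineCurve → p ∈ Metric.closedBall (0:ℝ×ℝ) 2 := by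
    intro p hp
    obtain ⟨h1, h2⟩ := dsc_bounds hp
    rw [Metric.mem_closedBall, Prod.dist_eq, max_le_iff]
    constructor <;> rw [Real.dist_eq] <;>
      simp only [Prod.fst_zero, Prod.snd_zero, sub_zero] <;> linarith
  set θ : ↥doubleSineCurve → ULift ↥(Metric.closedBall (0:ℝ×ℝ) 2) :=
    fun x => ULift.up ⟨x.1, hballmem x.1 x.2⟩ with hθdef
  have hθiso : Isometry θ := Isometry.of_dist_eq fun a b => rfl
  obtain ⟨δ, hδ, r, hr, hrx⟩ := h _ θ hθiso.isEmbedding (1/4) (by norm_num)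
  set t₀ := min δ 1 with ht₀def
  have ht₀ : 0 < t₀ := lt_min hδ one_pos
  have ht₀δ : t₀ ≤ δ := min_le_left _ _
  have ht₀1 : t₀ ≤ 1 := min_le_right _ _
  set c : ℝ → ℝ := fun s => max (-1) (min 1 (1 - 2*s)) with hcdef
  have hc_cont : Continuous c := continuous_const.max (continuous_const.min (by continuity))
  have hc_bound : ∀ s, |c s| ≤ 1 := fun s =>
    abs_le.mpr ⟨le_max_left _ _, max_le (by norm_num) (min_le_left _ _)⟩
  set σ : ℝ → ℝ × ℝ := fun s => (c s, dsg t₀ (c s)) with hσdef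
  have hσ_cont : Continuous σ := hc_cont.prodMk ((dsg_cont ht₀).comp hc_cont)
  have hσball : ∀ s, σ s ∈ Metric.closedBall (0:ℝ×ℝ) 2 := by
    intro s
    rw [Metric.mem_closedBall, Prod.dist_eq, max_le_iff]
    have h1 := hc_bound s
    have h2 := dsg_abs_le ht₀ (c s)
    constructor <;> rw [Real.dist_eq] <;>
      simp only [Prod.fst_zero, Prod.snd_zero, sub_zero] <;> linarith
  set σ' : ℝ → ULift ↥(Metric.closedBall (0:ℝ×ℝ) 2) :=
    fun s => ULift.up ⟨σ s, hσball s⟩ with hσ'def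
  have hσ'_cont : Continuous σ' :=
    continuous_uliftUp.comp (hσ_cont.subtype_mk _)
  have hσ'U : ∀ s, σ' s ∈ {y | Metric.infDist y (Set.range θ) ≤ δ} := by
    intro s
    rcases le_or_gt t₀ |c s| with hcase | hcase
    · have hne : c s ≠ 0 := by
        intro h0
        rw [h0, abs_zero] at hcase
        exact absurd hcase (not_le.mpr ht₀)
      have hmem : σ s ∈ doubleSineCurve := by
        have he : σ s = (c s, Real.sin (1/(c s))) := by
          rw [hσdef]; simp only; rw [dsg_eq_sin hcase]
        rw [he]
        exact dsc_mem_curve (hc_bound s) hne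
      have hle : Metric.infDist (σ' s) (Set.range θ) ≤ dist (σ' s) (θ ⟨σ s, hmem⟩) :=
        Metric.infDist_le_dist_of_mem (Set.mem_range_self _)
      have hd : dist (σ' s) (θ ⟨σ s, hmem⟩) = dist (σ s) (σ s) := rfl
      rw [Set.mem_setOf_eq]
      rw [hd, dist_self] at hle
      exact le_trans hle hδ.le
    · have hmem : ((0:ℝ), dsg t₀ (c s)) ∈ doubleSineCurve := dsc_mem_vert (dsg_abs_le ht₀ _)
      have hle : Metric.infDist (σ' s) (Set.range θ) ≤ dist (σ' s) (θ ⟨_, hmem⟩) :=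
        Metric.infDist_le_dist_of_mem (Set.mem_range_self _)
      have hd : dist (σ' s) (θ ⟨_, hmem⟩) = dist (σ s) ((0:ℝ), dsg t₀ (c s)) := rfl
      rw [Set.mem_setOf_eq]
      rw [hd] at hle
      refine le_trans hle (le_trans ?_ ht₀δ)
      rw [Prod.dist_eq]
      apply max_le
      · rw [Real.dist_eq]; simpa using hcase.le
      · rw [dist_self]; exact ht₀.le
  set ρ : ℝ → ℝ × ℝ := fun s => ((r (σ' s) : ↥doubleSineCurve) : ℝ × ℝ) with hρdef
  have hρ_cont : Continuous ρ := continuous_subtype_val.comp (hr.comp_continuous hσ'_cont hσ'U)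
  have hmemρ : ∀ s, ρ s ∈ doubleSineCurve := fun s => (r (σ' s)).2
  -- endpoints
  have hc0 : c 0 = 1 := by rw [hcdef]; norm_num
  have hc1 : c 1 = -1 := by rw [hcdef]; norm_num
  have hmem0 : ((1:ℝ), Real.sin (1/1)) ∈ doubleSineCurve :=
    dsc_mem_curve (by norm_num) one_ne_zero
  have hmem1 : ((-1:ℝ), Real.sin (1/(-1))) ∈ doubleSineCurve :=
    dsc_mem_curve (by norm_num) (by norm_num)
  have hσ0 : σ 0 = ((1:ℝ), Real.sin (1/1)) := by
    rw [hσdef]; simp only [hc0]; rw [dsg_eq_sin (by rw [abs_one]; exact ht₀1)]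
  have hσ1 : σ 1 = ((-1:ℝ), Real.sin (1/(-1))) := by
    rw [hσdef]; simp only [hc1]; rw [dsg_eq_sin (by rw [abs_neg, abs_one]; exact ht₀1)]
  have hθ0 : σ' 0 = θ ⟨((1:ℝ), Real.sin (1/1)), hmem0⟩ := by
    rw [hσ'def, hθdef]; exact congrArg ULift.up (Subtype.ext hσ0)
  have hθ1 : σ' 1 = θ ⟨((-1:ℝ), Real.sin (1/(-1))), hmem1⟩ := by
    rw [hσ'def, hθdef]; exact congrArg ULift.up (Subtype.ext hσ1)
  have h0' : dist (ρ 0) ((1:ℝ), Real.sin (1/1)) ≤ 1/4 := by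
    have hx := hrx ⟨((1:ℝ), Real.sin (1/1)), hmem0⟩
    rw [hθiso.dist_eq] at hx
    have he : dist (ρ 0) ((1:ℝ), Real.sin (1/1))
        = dist (r (θ ⟨((1:ℝ), Real.sin (1/1)), hmem0⟩)) ⟨((1:ℝ), Real.sin (1/1)), hmem0⟩ := by
      rw [hρdef]; simp only; rw [hθ0]; rfl
    rw [he]; exact hx
  have h1' : dist (ρ 1) ((-1:ℝ), Real.sin (1/(-1))) ≤ 1/4 := by
    have hx := hrx ⟨((-1:ℝ), Real.sin (1/(-1))), hmem1⟩
    rw [hθiso.dist_eq] at hx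
    have he : dist (ρ 1) ((-1:ℝ), Real.sin (1/(-1)))
        = dist (r (θ ⟨((-1:ℝ), Real.sin (1/(-1))), hmem1⟩)) ⟨((-1:ℝ), Real.sin (1/(-1))), hmem1⟩ := by
      rw [hρdef]; simp only; rw [hθ1]; rfl
    rw [he]; exact hx
  have hρ0 : 0 < (ρ 0).1 := by
    have h2 : dist (ρ 0).1 (1:ℝ) ≤ dist (ρ 0) ((1:ℝ), Real.sin (1/1)) := by
      rw [Prod.dist_eq]; exact le_max_left _ _
    rw [Real.dist_eq] at h2
    have hle : |(ρ 0).1 - 1| ≤ 1/4 := le_trans h2 h0'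
    rw [abs_le] at hle
    linarith [hle.1]
  have hρ1 : (ρ 1).1 < 0 := by
    have h2 : dist (ρ 1).1 (-1:ℝ) ≤ dist (ρ 1) ((-1:ℝ), Real.sin (1/(-1))) := by
      rw [Prod.dist_eq]; exact le_max_left _ _
    rw [Real.dist_eq] at h2
    have hle : |(ρ 1).1 - (-1)| ≤ 1/4 := le_trans h2 h1'
    rw [abs_le] at hle
    linarith [hle.2]
  exact no_path_in_dsc ρ hρ_cont hmemρ hρ0 hρ1
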